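/- For every n ≥ 1 and every s ∈ {0,…,n−1} there exists a bipartite latin bitrade B_s ⊆ Q_3^n with |B_s| = 2^{n+1} − 2^{s+1}; one such bitrade is B_s = ({0,1}^{n−s} △ {1,2}^{n−s}) × {0,1}^s. -/

import Mathlib

/-- The 1-dimensional face (line) of `Q_k^n` in direction `i` through the point `a`. -/
def line {k n : ℕ} (i : Fin n) (a : Fin n → Fin k) : Set (Fin n → Fin k) :=
  {x | ∀ j, j ≠ i → x j = a j}

/-- `B ⊆ Q_k^n` is a latin bitrade if it meets every 1-dimensional face in 0 or 2 points. -/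
def IsLatinBitrade {k n : ℕ} (B : Set (Fin n → Fin k)) : Prop :=
  ∀ (i : Fin n) (a : Fin n → Fin k),
    (B ∩ line i a).ncard = 0 ∨ (B ∩ line i a).ncard = 2

/-- The Hamming graph `Γ Q_k^n`. -/
def hammingGraph (k n : ℕ) : SimpleGraph (Fin n → Fin k) where
  Adj x y := hammingDist x y = 1
  symm := by
    constructor
    intro x y h
    rwa [hammingDist_comm]
  loopless := by
    constructor
    intro x h
    simp [hammingDist_self] at h

/-- A latin bitrade is bipartite if the subgraph of the Hamming graph induced by it
is bipartite (2-colorable). -/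
def IsBipartiteBitrade {k n : ℕ} (B : Set (Fin n → Fin k)) : Prop :=
  IsLatinBitrade B ∧ ((hammingGraph k n).induce B).Colorable 2

/-- The Cartesian product via concatenation of tuples. -/
def cartProd {k n m : ℕ} (B₁ : Set (Fin n → Fin k)) (B₂ : Set (Fin m → Fin k)) :
    Set (Fin (n + m) → Fin k) :=
  {z | ∃ x ∈ B₁, ∃ y ∈ B₂, z = Fin.append x y}

/-- The subcube `{0,1}^m` of `Q_3^m`. -/
def cube01 (m : ℕ) : Set (Fin m → Fin 3) := {x | ∀ j, x j = 0 ∨ x j = 1}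

/-- The subcube `{1,2}^m` of `Q_3^m`. -/
def cube12 (m : ℕ) : Set (Fin m → Fin 3) := {x | ∀ j, x j = 1 ∨ x j = 2}


lemma mem_cartProd {k n m : ℕ} {B₁ : Set (Fin n → Fin k)} {B₂ : Set (Fin m → Fin k)}
    {z : Fin (n + m) → Fin k} :
    z ∈ cartProd B₁ B₂ ↔
      (fun j => z (Fin.castAdd m j)) ∈ B₁ ∧ (fun j => z (Fin.natAdd n j)) ∈ B₂ := by
  constructor
  · rintro ⟨x, hx, y, hy, rfl⟩
    refine ⟨?_, ?_⟩
    · have : (fun j => Fin.append x y (Fin.castAdd m j)) = x := by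
        funext j; exact Fin.append_left x y j
      rwa [this]
    · have : (fun j => Fin.append x y (Fin.natAdd n j)) = y := by
        funext j; exact Fin.append_right x y j
      rwa [this]
  · rintro ⟨h1, h2⟩
    exact ⟨_, h1, _, h2, Fin.append_castAdd_natAdd.symm⟩

lemma cartProd_ncard {k n m : ℕ} (B₁ : Set (Fin n → Fin k)) (B₂ : Set (Fin m → Fin k)) :
    (cartProd B₁ B₂).ncard = B₁.ncard * B₂.ncard := by
  have himg : cartProd B₁ B₂ = (fun p : (Fin n → Fin k) × (Fin m → Fin k) =>
      Fin.append p.1 p.2) '' (B₁ ×ˢ B₂) := by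
    ext z
    constructor
    · rintro ⟨x, hx, y, hy, rfl⟩; exact ⟨(x, y), ⟨hx, hy⟩, rfl⟩
    · rintro ⟨⟨x, y⟩, ⟨hx, hy⟩, rfl⟩; exact ⟨x, hx, y, hy, rfl⟩
  have hinj : Function.Injective (fun p : (Fin n → Fin k) × (Fin m → Fin k) =>
      Fin.append p.1 p.2) := by
    rintro ⟨x, y⟩ ⟨x', y'⟩ h
    simp only [Prod.mk.injEq]
    constructor
    · funext j
      have := congrFun h (Fin.castAdd m j)
      simpa [Fin.append_left] using this
    · funext j
      have := congrFun h (Fin.natAdd n j)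
      simpa [Fin.append_right] using this
  rw [himg, Set.ncard_image_of_injective _ hinj]
  rw [← Nat.card_coe_set_eq, ← Nat.card_coe_set_eq, ← Nat.card_coe_set_eq]
  rw [Nat.card_congr (Equiv.Set.prod B₁ B₂), Nat.card_prod]

lemma ncard_cube01 (s : ℕ) : (cube01 s).ncard = 2 ^ s := by
  have : cube01 s = Set.range (fun (b : Fin s → Fin 2) (j : Fin s) =>
      (⟨(b j).val, by omega⟩ : Fin 3)) := by
    ext x
    constructor
    · intro hx
      refine ⟨fun j => ⟨(x j).val, ?_⟩, ?_⟩
      · rcases hx j with h | h <;> simp [h]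
      · funext j; exact Fin.ext rfl
    · rintro ⟨b, rfl⟩ j
      have : (b j).val = 0 ∨ (b j).val = 1 := by omega
      rcases this with h | h
      · left; exact Fin.ext h
      · right; exact Fin.ext h
  rw [this, ← Nat.card_coe_set_eq, Nat.card_range_of_injective]
  · simp [Nat.card_eq_fintype_card]
  · intro b b' h
    funext j
    have h2 : ((b j) : ℕ) = b' j := by simpa using congrFun h j
    exact Fin.ext h2

lemma ncard_cube12 (s : ℕ) : (cube12 s).ncard = 2 ^ s := by
  have : cube12 s = Set.range (fun (b : Fin s → Fin 2) (j : Fin s) =>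
      (⟨(b j).val + 1, by omega⟩ : Fin 3)) := by
    ext x
    constructor
    · intro hx
      refine ⟨fun j => ⟨(x j).val - 1, ?_⟩, ?_⟩
      · rcases hx j with h | h <;> simp [h] <;> omega
      · funext j
        refine Fin.ext ?_
        show (x j).val - 1 + 1 = (x j).val
        rcases hx j with h | h <;> simp [h]
    · rintro ⟨b, rfl⟩ j
      have : (b j).val = 0 ∨ (b j).val = 1 := by omega
      rcases this with h | h
      · left; exact Fin.ext (by simp [h])
      · right; exact Fin.ext (by simp [h])
  rw [this, ← Nat.card_coe_set_eq, Nat.card_range_of_injective]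
  · simp [Nat.card_eq_fintype_card]
  · intro b b' h
    funext j
    have h2 : ((b j) : ℕ) + 1 = (b' j : ℕ) + 1 := by simpa using congrFun h j
    exact Fin.ext (by omega)

lemma cube_inter (m : ℕ) : cube01 m ∩ cube12 m = {fun _ => 1} := by
  ext x
  simp only [Set.mem_inter_iff, Set.mem_singleton_iff, cube01, cube12, Set.mem_setOf_eq]
  constructor
  · rintro ⟨h1, h2⟩
    funext j
    rcases h1 j with h | h <;> rcases h2 j with h' | h' <;> first | exact h | exact h' | (exfalso; rw [h] at h'; exact absurd h' (by decide)) | rfl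
  · rintro rfl
    exact ⟨fun j => Or.inr rfl, fun j => Or.inl rfl⟩

lemma ncard_symmDiff_cube (m : ℕ) :
    (symmDiff (cube01 m) (cube12 m)).ncard = 2 ^ (m + 1) - 2 := by
  have hd : symmDiff (cube01 m) (cube12 m) = (cube01 m ∪ cube12 m) \ (cube01 m ∩ cube12 m) := by
    ext x; simp only [Set.mem_symmDiff, Set.mem_diff, Set.mem_union, Set.mem_inter_iff]; tauto
  have hsub : cube01 m ∩ cube12 m ⊆ cube01 m ∪ cube12 m :=
    Set.inter_subset_left.trans Set.subset_union_left
  have hu : (cube01 m ∪ cube12 m).ncard + (cube01 m ∩ cube12 m).ncard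
      = (cube01 m).ncard + (cube12 m).ncard :=
    Set.ncard_union_add_ncard_inter _ _ (Set.toFinite _) (Set.toFinite _)
  have hi : (cube01 m ∩ cube12 m).ncard = 1 := by
    rw [cube_inter]; exact Set.ncard_singleton _
  rw [hd, Set.ncard_diff hsub (Set.toFinite _), hi]
  rw [hi, ncard_cube01, ncard_cube12] at hu
  have h1 : 1 ≤ 2 ^ m := Nat.one_le_two_pow
  omega

lemma ncard_Bs (m s : ℕ) :
    (cartProd (symmDiff (cube01 m) (cube12 m)) (cube01 s)).ncard =
      2 ^ (m + s + 1) - 2 ^ (s + 1) := by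
  rw [cartProd_ncard, ncard_symmDiff_cube, ncard_cube01]
  have h1 : 1 ≤ 2 ^ m := Nat.one_le_two_pow
  have : (2 ^ (m + 1) - 2) * 2 ^ s = 2 ^ (m + 1) * 2 ^ s - 2 * 2 ^ s := by
    rw [Nat.sub_mul]
  rw [this, ← pow_add, ← pow_succ']
  ring_nf

lemma fin3_cases : ∀ v : Fin 3, v = 0 ∨ v = 1 ∨ v = 2 := by decide

lemma mem_Bs {m s : ℕ} {z : Fin (m + s) → Fin 3} :
    z ∈ cartProd (symmDiff (cube01 m) (cube12 m)) (cube01 s) ↔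
      (((∀ j, z (Fin.castAdd s j) = 0 ∨ z (Fin.castAdd s j) = 1) ∨
        (∀ j, z (Fin.castAdd s j) = 1 ∨ z (Fin.castAdd s j) = 2)) ∧
        ¬(∀ j, z (Fin.castAdd s j) = 1)) ∧
      (∀ j, z (Fin.natAdd m j) = 0 ∨ z (Fin.natAdd m j) = 1) := by
  rw [mem_cartProd, Set.mem_symmDiff]
  simp only [cube01, cube12, Set.mem_setOf_eq]
  have key : ((∀ j, z (Fin.castAdd s j) = 0 ∨ z (Fin.castAdd s j) = 1) ∧
      (∀ j, z (Fin.castAdd s j) = 1 ∨ z (Fin.castAdd s j) = 2)) ↔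
      (∀ j, z (Fin.castAdd s j) = 1) := by
    constructor
    · rintro ⟨h1, h2⟩ j
      rcases h1 j with h | h <;> rcases h2 j with h' | h' <;>
        first | exact h | exact h' | (rw [h] at h'; exact absurd h' (by decide))
    · intro h; exact ⟨fun j => Or.inr (h j), fun j => Or.inl (h j)⟩
  constructor
  · rintro ⟨h, hy⟩
    refine ⟨⟨?_, ?_⟩, hy⟩
    · tauto
    · intro hC
      have := key.mpr hC
      tauto
  · rintro ⟨⟨h1, h2⟩, hy⟩
    refine ⟨?_, hy⟩
    rcases h1 with h | h
    · left; exact ⟨h, fun hb => h2 (key.mp ⟨h, hb⟩)⟩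
    · right; exact ⟨h, fun hb => h2 (key.mp ⟨hb, h⟩)⟩

lemma castAdd_ne_natAdd {m s : ℕ} (i : Fin m) (j : Fin s) :
    Fin.castAdd s i ≠ Fin.natAdd m j := by
  intro h
  have h2 : (i : ℕ) = m + j := congrArg Fin.val h
  have := i.isLt
  omega

lemma line_eq {k n : ℕ} (i : Fin n) (a : Fin n → Fin k) :
    line i a = Set.range (Function.update a i) := by
  ext x
  constructor
  · intro hx
    refine ⟨x i, ?_⟩
    funext j
    rcases eq_or_ne j i with rfl | h
    · simp
    · simp [Function.update_of_ne h, hx j h]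
  · rintro ⟨v, rfl⟩ j hj
    simp [Function.update_of_ne hj]

lemma ncard_inter_line {k n : ℕ} (B : Set (Fin n → Fin k)) (i : Fin n) (a : Fin n → Fin k) :
    (B ∩ line i a).ncard = {v : Fin k | Function.update a i v ∈ B}.ncard := by
  rw [line_eq]
  have h : B ∩ Set.range (Function.update a i)
      = Function.update a i '' {v | Function.update a i v ∈ B} := by
    ext x
    constructor
    · rintro ⟨hB, v, rfl⟩; exact ⟨v, hB, rfl⟩
    · rintro ⟨v, hv, rfl⟩; exact ⟨hv, v, rfl⟩
  rw [h, Set.ncard_image_of_injective _ (Function.update_injective a i)]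

lemma isLatin_Bs (m s : ℕ) :
    IsLatinBitrade (cartProd (symmDiff (cube01 m) (cube12 m)) (cube01 s)) := by
  intro i a
  rw [ncard_inter_line]
  rcases lt_or_ge (i : ℕ) m with hlt | hge
  · -- i in the first block
    set i0 : Fin m := ⟨i, hlt⟩ with hi0def
    have hi : i = Fin.castAdd s i0 := Fin.ext rfl
    have hupd : ∀ (v : Fin 3) (j : Fin m),
        Function.update a i v (Fin.castAdd s j) = if j = i0 then v else a (Fin.castAdd s j) := by
      intro v j
      rcases eq_or_ne j i0 with rfl | hj
      · rw [if_pos rfl, hi, Function.update_self]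
      · rw [if_neg hj, hi, Function.update_of_ne (by simpa using hj)]
    have hupdy : ∀ (v : Fin 3) (j : Fin s),
        Function.update a i v (Fin.natAdd m j) = a (Fin.natAdd m j) := by
      intro v j
      rw [hi, Function.update_of_ne (castAdd_ne_natAdd i0 j).symm]
    by_cases hy : ∀ j, a (Fin.natAdd m j) = 0 ∨ a (Fin.natAdd m j) = 1
    · by_cases h0 : ∃ j, j ≠ i0 ∧ a (Fin.castAdd s j) = 0
      · by_cases h2 : ∃ j, j ≠ i0 ∧ a (Fin.castAdd s j) = 2
        · -- empty
          left
          have hempty : {v : Fin 3 | Function.update a i v ∈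
              cartProd (symmDiff (cube01 m) (cube12 m)) (cube01 s)} = ∅ := by
            ext v
            simp only [Set.mem_setOf_eq, Set.mem_empty_iff_false, iff_false]
            intro hv
            obtain ⟨⟨hC, -⟩, -⟩ := mem_Bs.mp hv
            rcases hC with hC | hC
            · obtain ⟨j, hj, hj2⟩ := h2
              have := hC j
              rw [hupd v j, if_neg hj, hj2] at this
              exact absurd this (by decide)
            · obtain ⟨j, hj, hj0⟩ := h0
              have := hC j
              rw [hupd v j, if_neg hj, hj0] at this
              exact absurd this (by decide)
          rw [hempty]; exact Set.ncard_empty _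
        · -- S = {0, 1}
          right
          have ha' : ∀ j, j ≠ i0 → a (Fin.castAdd s j) = 0 ∨ a (Fin.castAdd s j) = 1 := by
            intro j hj
            rcases fin3_cases (a (Fin.castAdd s j)) with h | h | h
            · exact Or.inl h
            · exact Or.inr h
            · exact absurd ⟨j, hj, h⟩ h2
          have hset : {v : Fin 3 | Function.update a i v ∈
              cartProd (symmDiff (cube01 m) (cube12 m)) (cube01 s)} = {0, 1} := by
            ext v
            simp only [Set.mem_setOf_eq, Set.mem_insert_iff, Set.mem_singleton_iff]
            rw [mem_Bs]
            constructor
            · rintro ⟨⟨hC, -⟩, -⟩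
              rcases hC with hC | hC
              · have := hC i0
                rwa [hupd v i0, if_pos rfl] at this
              · obtain ⟨j, hj, hj0⟩ := h0
                have := hC j
                rw [hupd v j, if_neg hj, hj0] at this
                exact absurd this (by decide)
            · intro hv
              refine ⟨⟨Or.inl ?_, ?_⟩, ?_⟩
              · intro j
                rw [hupd v j]
                rcases eq_or_ne j i0 with rfl | hj
                · rw [if_pos rfl]; exact hv
                · rw [if_neg hj]; exact ha' j hj
              · intro hA
                obtain ⟨j, hj, hj0⟩ := h0
                have := hA j
                rw [hupd v j, if_neg hj, hj0] at this
                exact absurd this (by decide)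
              · intro j; rw [hupdy v j]; exact hy j
          rw [hset]; exact Set.ncard_pair (by decide)
      · by_cases h2 : ∃ j, j ≠ i0 ∧ a (Fin.castAdd s j) = 2
        · -- S = {1, 2}
          right
          have ha' : ∀ j, j ≠ i0 → a (Fin.castAdd s j) = 1 ∨ a (Fin.castAdd s j) = 2 := by
            intro j hj
            rcases fin3_cases (a (Fin.castAdd s j)) with h | h | h
            · exact absurd ⟨j, hj, h⟩ h0
            · exact Or.inl h
            · exact Or.inr h
          have hset : {v : Fin 3 | Function.update a i v ∈
              cartProd (symmDiff (cube01 m) (cube12 m)) (cube01 s)} = {1, 2} := by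
            ext v
            simp only [Set.mem_setOf_eq, Set.mem_insert_iff, Set.mem_singleton_iff]
            rw [mem_Bs]
            constructor
            · rintro ⟨⟨hC, -⟩, -⟩
              rcases hC with hC | hC
              · obtain ⟨j, hj, hj2⟩ := h2
                have := hC j
                rw [hupd v j, if_neg hj, hj2] at this
                exact absurd this (by decide)
              · have := hC i0
                rwa [hupd v i0, if_pos rfl] at this
            · intro hv
              refine ⟨⟨Or.inr ?_, ?_⟩, ?_⟩
              · intro j
                rw [hupd v j]
                rcases eq_or_ne j i0 with rfl | hj
                · rw [if_pos rfl]; exact hv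
                · rw [if_neg hj]; exact ha' j hj
              · intro hA
                obtain ⟨j, hj, hj2⟩ := h2
                have := hA j
                rw [hupd v j, if_neg hj, hj2] at this
                exact absurd this (by decide)
              · intro j; rw [hupdy v j]; exact hy j
          rw [hset]; exact Set.ncard_pair (by decide)
        · -- all other first-block coords are 1; S = {0, 2}
          right
          have ha' : ∀ j, j ≠ i0 → a (Fin.castAdd s j) = 1 := by
            intro j hj
            rcases fin3_cases (a (Fin.castAdd s j)) with h | h | h
            · exact absurd ⟨j, hj, h⟩ h0
            · exact h
            · exact absurd ⟨j, hj, h⟩ h2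
          have hset : {v : Fin 3 | Function.update a i v ∈
              cartProd (symmDiff (cube01 m) (cube12 m)) (cube01 s)} = {0, 2} := by
            ext v
            simp only [Set.mem_setOf_eq, Set.mem_insert_iff, Set.mem_singleton_iff]
            rw [mem_Bs]
            constructor
            · rintro ⟨⟨hC, hA⟩, -⟩
              have hv1 : v ≠ 1 := by
                intro hv1
                apply hA
                intro j
                rw [hupd v j]
                rcases eq_or_ne j i0 with rfl | hj
                · rw [if_pos rfl]; exact hv1
                · rw [if_neg hj]; exact ha' j hj
              rcases fin3_cases v with h | h | h
              · exact Or.inl h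
              · exact absurd h hv1
              · exact Or.inr h
            · intro hv
              have hvio : Function.update a i v (Fin.castAdd s i0) = v := by
                rw [hupd v i0, if_pos rfl]
              rcases hv with rfl | rfl
              · refine ⟨⟨Or.inl ?_, ?_⟩, ?_⟩
                · intro j
                  rw [hupd _ j]
                  rcases eq_or_ne j i0 with rfl | hj
                  · rw [if_pos rfl]; exact Or.inl rfl
                  · rw [if_neg hj]; exact Or.inr (ha' j hj)
                · intro hA
                  have := hA i0
                  rw [hvio] at this
                  exact absurd this (by decide)
                · intro j; rw [hupdy _ j]; exact hy j
              · refine ⟨⟨Or.inr ?_, ?_⟩, ?_⟩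
                · intro j
                  rw [hupd _ j]
                  rcases eq_or_ne j i0 with rfl | hj
                  · rw [if_pos rfl]; exact Or.inr rfl
                  · rw [if_neg hj]; exact Or.inl (ha' j hj)
                · intro hA
                  have := hA i0
                  rw [hvio] at this
                  exact absurd this (by decide)
                · intro j; rw [hupdy _ j]; exact hy j
          rw [hset]; exact Set.ncard_pair (by decide)
    · -- y-part of a fails: empty
      left
      have hempty : {v : Fin 3 | Function.update a i v ∈
          cartProd (symmDiff (cube01 m) (cube12 m)) (cube01 s)} = ∅ := by
        ext v
        simp only [Set.mem_setOf_eq, Set.mem_empty_iff_false, iff_false]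
        intro hv
        obtain ⟨-, hy'⟩ := mem_Bs.mp hv
        exact hy (fun j => by rw [← hupdy v j]; exact hy' j)
      rw [hempty]; exact Set.ncard_empty _
  · -- i in the second block
    have hisLt := i.isLt
    set i1 : Fin s := ⟨(i : ℕ) - m, by omega⟩ with hi1def
    have hi : i = Fin.natAdd m i1 := Fin.ext (by show (i : ℕ) = m + ((i : ℕ) - m); omega)
    have hupd : ∀ (v : Fin 3) (j : Fin m),
        Function.update a i v (Fin.castAdd s j) = a (Fin.castAdd s j) := by
      intro v j
      rw [hi, Function.update_of_ne (castAdd_ne_natAdd j i1)]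
    have hupdy : ∀ (v : Fin 3) (j : Fin s),
        Function.update a i v (Fin.natAdd m j) = if j = i1 then v else a (Fin.natAdd m j) := by
      intro v j
      rcases eq_or_ne j i1 with rfl | hj
      · rw [if_pos rfl, hi, Function.update_self]
      · rw [if_neg hj, hi, Function.update_of_ne]
        intro hc
        have h2 : m + (j : ℕ) = m + (i1 : ℕ) := congrArg Fin.val hc
        exact hj (Fin.ext (by omega))
    by_cases hD : ((∀ j, a (Fin.castAdd s j) = 0 ∨ a (Fin.castAdd s j) = 1) ∨
        (∀ j, a (Fin.castAdd s j) = 1 ∨ a (Fin.castAdd s j) = 2)) ∧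
        ¬(∀ j, a (Fin.castAdd s j) = 1)
    · by_cases hy' : ∀ j, j ≠ i1 → a (Fin.natAdd m j) = 0 ∨ a (Fin.natAdd m j) = 1
      · -- S = {0, 1}
        right
        have hset : {v : Fin 3 | Function.update a i v ∈
            cartProd (symmDiff (cube01 m) (cube12 m)) (cube01 s)} = {0, 1} := by
          ext v
          simp only [Set.mem_setOf_eq, Set.mem_insert_iff, Set.mem_singleton_iff]
          rw [mem_Bs]
          constructor
          · rintro ⟨-, hyy⟩
            have := hyy i1
            rwa [hupdy v i1, if_pos rfl] at this
          · intro hv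
            obtain ⟨hC, hA⟩ := hD
            refine ⟨⟨?_, ?_⟩, ?_⟩
            · rcases hC with hC | hC
              · left; intro j; rw [hupd v j]; exact hC j
              · right; intro j; rw [hupd v j]; exact hC j
            · intro hA'
              exact hA (fun j => by rw [← hupd v j]; exact hA' j)
            · intro j
              rw [hupdy v j]
              rcases eq_or_ne j i1 with rfl | hj
              · rw [if_pos rfl]; exact hv
              · rw [if_neg hj]; exact hy' j hj
        rw [hset]; exact Set.ncard_pair (by decide)
      · -- empty
        left
        have hempty : {v : Fin 3 | Function.update a i v ∈
            cartProd (symmDiff (cube01 m) (cube12 m)) (cube01 s)} = ∅ := by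
          ext v
          simp only [Set.mem_setOf_eq, Set.mem_empty_iff_false, iff_false]
          intro hv
          obtain ⟨-, hyy⟩ := mem_Bs.mp hv
          apply hy'
          intro j hj
          have := hyy j
          rwa [hupdy v j, if_neg hj] at this
        rw [hempty]; exact Set.ncard_empty _
    · -- x-part of a fails: empty
      left
      have hempty : {v : Fin 3 | Function.update a i v ∈
          cartProd (symmDiff (cube01 m) (cube12 m)) (cube01 s)} = ∅ := by
        ext v
        simp only [Set.mem_setOf_eq, Set.mem_empty_iff_false, iff_false]
        intro hv
        obtain ⟨⟨hC, hA⟩, -⟩ := mem_Bs.mp hv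
        apply hD
        constructor
        · rcases hC with hC | hC
          · left; intro j; rw [← hupd v j]; exact hC j
          · right; intro j; rw [← hupd v j]; exact hC j
        · intro hA'
          exact hA (fun j => by rw [hupd v j]; exact hA' j)
      rw [hempty]; exact Set.ncard_empty _

section Coloring

variable {m s : ℕ}

/-- indicator: 1 if all first-block coordinates are nonzero -/
noncomputable def indf (m s : ℕ) (w : Fin (m + s) → Fin 3) : ZMod 2 :=
  if ∀ j : Fin m, w (Fin.castAdd s j) ≠ 0 then 1 else 0

noncomputable def colf (m s : ℕ) (w : Fin (m + s) → Fin 3) : ZMod 2 :=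
  (∑ j, ((w j).val : ZMod 2)) + indf m s w

lemma indf_eq_zero {w : Fin (m + s) → Fin 3} (i0 : Fin m)
    (h : w (Fin.castAdd s i0) = 0) : indf m s w = 0 := by
  rw [indf, if_neg]
  intro hall
  exact hall i0 h

lemma indf_eq_one {w : Fin (m + s) → Fin 3}
    (hw : w ∈ cartProd (symmDiff (cube01 m) (cube12 m)) (cube01 s))
    (i0 : Fin m) (h : w (Fin.castAdd s i0) = 2) : indf m s w = 1 := by
  obtain ⟨⟨hC, -⟩, -⟩ := mem_Bs.mp hw
  rcases hC with hC | hC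
  · rcases hC i0 with h' | h' <;> (rw [h] at h'; exact absurd h' (by decide))
  · rw [indf, if_pos]
    intro j
    rcases hC j with h' | h' <;> (rw [h']; decide)

lemma block_of_two {w : Fin (m + s) → Fin 3}
    (hw : w ∈ cartProd (symmDiff (cube01 m) (cube12 m)) (cube01 s))
    {i : Fin (m + s)} (h : w i = 2) : ∃ i0 : Fin m, i = Fin.castAdd s i0 := by
  obtain ⟨-, hy⟩ := mem_Bs.mp hw
  rcases lt_or_ge (i : ℕ) m with hlt | hge
  · exact ⟨⟨i, hlt⟩, Fin.ext rfl⟩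
  · exfalso
    have hisLt := i.isLt
    have hi : i = Fin.natAdd m ⟨(i : ℕ) - m, by omega⟩ :=
      Fin.ext (by show (i : ℕ) = m + ((i : ℕ) - m); omega)
    rcases hy ⟨(i : ℕ) - m, by omega⟩ with h' | h' <;>
      (rw [← hi, h] at h'; exact absurd h' (by decide))

lemma claim2 {x y : Fin (m + s) → Fin 3}
    (hx : x ∈ cartProd (symmDiff (cube01 m) (cube12 m)) (cube01 s))
    (hy : y ∈ cartProd (symmDiff (cube01 m) (cube12 m)) (cube01 s))
    {i : Fin (m + s)} (hagree : ∀ j, j ≠ i → x j = y j)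
    (hix : indf m s x = 1) (hiy : indf m s y = 0) : x i = 2 ∧ y i = 0 := by
  have hx0 : ∀ j : Fin m, x (Fin.castAdd s j) ≠ 0 := by
    by_contra h
    rw [indf, if_neg h] at hix
    exact absurd hix (by decide)
  have hy0 : ∃ j : Fin m, y (Fin.castAdd s j) = 0 := by
    by_contra h
    push_neg at h
    rw [indf, if_pos h] at hiy
    exact absurd hiy (by decide)
  obtain ⟨i0, hi0⟩ := hy0
  have hii : Fin.castAdd s i0 = i := by
    by_contra hne
    exact hx0 i0 (by rw [hagree _ hne]; exact hi0)
  obtain ⟨⟨hCx, hAx⟩, -⟩ := mem_Bs.mp hx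
  obtain ⟨⟨hCy, -⟩, -⟩ := mem_Bs.mp hy
  have hx12 : ∀ j : Fin m, x (Fin.castAdd s j) = 1 ∨ x (Fin.castAdd s j) = 2 := by
    rcases hCx with hC | hC
    · exact absurd (fun j => (hC j).resolve_left (hx0 j)) hAx
    · exact hC
  have hy01 : ∀ j : Fin m, y (Fin.castAdd s j) = 0 ∨ y (Fin.castAdd s j) = 1 := by
    rcases hCy with hC | hC
    · exact hC
    · rcases hC i0 with h | h <;> (rw [hi0] at h; exact absurd h (by decide))
  have hsh : ∀ j : Fin m, j ≠ i0 → x (Fin.castAdd s j) = 1 := by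
    intro j hj
    have hne : Fin.castAdd s j ≠ i := by
      rw [← hii]
      simpa using hj
    have heq := hagree _ hne
    rcases hx12 j with h | h
    · exact h
    · rcases hy01 j with h' | h' <;> (rw [heq, h'] at h; exact absurd h (by decide))
  have hx2 : x i = 2 := by
    rw [← hii]
    rcases hx12 i0 with h | h
    · exfalso
      apply hAx
      intro j
      rcases eq_or_ne j i0 with rfl | hj
      · exact h
      · exact hsh j hj
    · exact h
  exact ⟨hx2, by rw [← hii]; exact hi0⟩

lemma colf_ne {x y : Fin (m + s) → Fin 3}
    (hx : x ∈ cartProd (symmDiff (cube01 m) (cube12 m)) (cube01 s))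
    (hy : y ∈ cartProd (symmDiff (cube01 m) (cube12 m)) (cube01 s))
    {i : Fin (m + s)} (hagree : ∀ j, j ≠ i → x j = y j)
    (hne : x i ≠ y i) : colf m s x ≠ colf m s y := by
  have hsum : colf m s x + colf m s y
      = (((x i).val : ZMod 2) + ((y i).val : ZMod 2)) + indf m s x + indf m s y := by
    rw [colf, colf]
    have hdist : (∑ j, ((x j).val : ZMod 2)) + indf m s x
        + ((∑ j, ((y j).val : ZMod 2)) + indf m s y)
        = (∑ j, (((x j).val : ZMod 2) + ((y j).val : ZMod 2))) + indf m s x + indf m s y := by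
      rw [Finset.sum_add_distrib]; ring
    rw [hdist]
    have hsplit : (∑ j, (((x j).val : ZMod 2) + ((y j).val : ZMod 2)))
        = ((x i).val : ZMod 2) + ((y i).val : ZMod 2) := by
      rw [← Finset.add_sum_erase _ _ (Finset.mem_univ i)]
      have hz : ∑ j ∈ Finset.univ.erase i, (((x j).val : ZMod 2) + ((y j).val : ZMod 2)) = 0 := by
        apply Finset.sum_eq_zero
        intro j hj
        rw [hagree j (Finset.ne_of_mem_erase hj)]
        exact CharTwo.add_self_eq_zero _
      rw [hz, add_zero]
    rw [hsplit]
  have hone : colf m s x + colf m s y = 1 := by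
    rw [hsum]
    by_cases hind : indf m s x = indf m s y
    · have hi02 : ¬((x i = 0 ∧ y i = 2) ∨ (x i = 2 ∧ y i = 0)) := by
        rintro (⟨h1, h2⟩ | ⟨h1, h2⟩)
        · obtain ⟨i0, rfl⟩ := block_of_two hy h2
          rw [indf_eq_zero i0 h1, indf_eq_one hy i0 h2] at hind
          exact absurd hind (by decide)
        · obtain ⟨i0, rfl⟩ := block_of_two hx h1
          rw [indf_eq_one hx i0 h1, indf_eq_zero i0 h2] at hind
          exact absurd hind (by decide)
      have hval : ((x i).val : ZMod 2) + ((y i).val : ZMod 2) = 1 := by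
        rcases fin3_cases (x i) with h | h | h <;> rcases fin3_cases (y i) with h' | h' | h' <;>
          first
          | (rw [h, h']; decide)
          | (exfalso; exact hne (h.trans h'.symm))
          | (exfalso; exact hi02 (Or.inl ⟨h, h'⟩))
          | (exfalso; exact hi02 (Or.inr ⟨h, h'⟩))
      rw [hval, hind, add_assoc, CharTwo.add_self_eq_zero, add_zero]
    · have hvals : (indf m s x = 1 ∧ indf m s y = 0) ∨ (indf m s x = 0 ∧ indf m s y = 1) := by
        rw [indf, indf] at hind ⊢
        by_cases c1 : ∀ j : Fin m, x (Fin.castAdd s j) ≠ 0 <;>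
          by_cases c2 : ∀ j : Fin m, y (Fin.castAdd s j) ≠ 0 <;>
          simp [c1, c2] at hind ⊢
      rcases hvals with ⟨h1, h2⟩ | ⟨h1, h2⟩
      · obtain ⟨hx2, hy0⟩ := claim2 hx hy hagree h1 h2
        rw [hx2, hy0, h1, h2]
        decide
      · obtain ⟨hy2, hx0⟩ := claim2 hy hx (fun j hj => (hagree j hj).symm) h2 h1
        rw [hy2, hx0, h1, h2]
        decide
  intro heq
  rw [heq, CharTwo.add_self_eq_zero] at hone
  exact absurd hone (by decide)

lemma exists_diff {n k : ℕ} {x y : Fin n → Fin k} (h : hammingDist x y = 1) :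
    ∃ i, x i ≠ y i ∧ ∀ j, j ≠ i → x j = y j := by
  rw [hammingDist] at h
  obtain ⟨i, hi⟩ := Finset.card_eq_one.mp h
  refine ⟨i, ?_, ?_⟩
  · have hmem : i ∈ Finset.filter (fun j => x j ≠ y j) Finset.univ :=
      hi ▸ Finset.mem_singleton_self i
    exact (Finset.mem_filter.mp hmem).2
  · intro j hj
    by_contra hne
    have hmem : j ∈ Finset.filter (fun j => x j ≠ y j) Finset.univ :=
      Finset.mem_filter.mpr ⟨Finset.mem_univ j, hne⟩
    rw [hi] at hmem
    exact hj (Finset.mem_singleton.mp hmem)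

lemma colorable_Bs (m s : ℕ) :
    ((hammingGraph 3 (m + s)).induce
      (cartProd (symmDiff (cube01 m) (cube12 m)) (cube01 s))).Colorable 2 := by
  have C : ((hammingGraph 3 (m + s)).induce
      (cartProd (symmDiff (cube01 m) (cube12 m)) (cube01 s))).Coloring (ZMod 2) := by
    refine SimpleGraph.Coloring.mk (fun z => colf m s z.val) ?_
    intro u v huv
    have hadj : hammingDist u.val v.val = 1 := huv
    obtain ⟨i, hne, hagree⟩ := exists_diff hadj
    exact colf_ne u.prop v.prop hagree hne
  have := C.colorable
  simpa using this

end Coloring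

/-- Here `n = m + s` with `m = n - s ≥ 1`, i.e. `n ≥ 1` and `s ∈ {0,…,n-1}`:
the set `B_s = ({0,1}^{n-s} △ {1,2}^{n-s}) × {0,1}^s ⊆ Q_3^n` is a bipartite
latin bitrade of cardinality `2^{n+1} - 2^{s+1}`. -/
theorem stmt_13 (m s : ℕ) (hm : 1 ≤ m) :
    IsBipartiteBitrade (cartProd (symmDiff (cube01 m) (cube12 m)) (cube01 s)) ∧
    (cartProd (symmDiff (cube01 m) (cube12 m)) (cube01 s)).ncard =
      2 ^ (m + s + 1) - 2 ^ (s + 1) := by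
  refine ⟨⟨isLatin_Bs m s, colorable_Bs m s⟩, ncard_Bs m s⟩
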